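/- Let n ≥ 1, x > 0, 0 ≤ m < n, and let v* ∈ ℝⁿ be any equidistant vector for mass mx, with Δ_y = ⌊(n+1)/(m+1)⌋. Then for every j with 1 ≤ j ≤ Δ_y: f_j(v*) = (n + 1 − j)·x − j·(m·x). -/

import Mathlib

open Finset

/-- `f_j v = Σ_{l=1}^{n+1−j} (x − Σ_{i=0}^{j−1} v_{l+i})⁺`, the sum of positive parts of
the deficits of all length-`j` windows of consecutive coordinates (`l` is 0-indexed here). -/
noncomputable def fj (n : ℕ) (x : ℝ) (j : ℕ) (v : Fin n → ℝ) : ℝ :=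
  ∑ l ∈ Finset.range (n + 1 - j),
    max (x - ∑ i ∈ Finset.range j, if h : l + i < n then v ⟨l + i, h⟩ else 0) 0

/-- An equidistant vector for mass `m·x`: determined by positive integers `Δ_1,…,Δ_{m+1}`
with `Σ Δ_k = n+1` and `|Δ_{k₁} − Δ_{k₂}| ≤ 1`, with `v_i = x` exactly when the 1-based
index `i` is one of the partial sums `Σ_{k=1}^{j} Δ_k`, `1 ≤ j ≤ m`. -/
def IsEquidistant (n m : ℕ) (x : ℝ) (v : Fin n → ℝ) : Prop :=
  ∃ Δ : ℕ → ℕ,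
    (∀ k ∈ Finset.Icc 1 (m + 1), 0 < Δ k) ∧
    (∑ k ∈ Finset.Icc 1 (m + 1), Δ k = n + 1) ∧
    (∀ k₁ ∈ Finset.Icc 1 (m + 1), ∀ k₂ ∈ Finset.Icc 1 (m + 1), Δ k₁ ≤ Δ k₂ + 1) ∧
    (∀ i : Fin n,
      ((∃ j, 1 ≤ j ∧ j ≤ m ∧ (i : ℕ) + 1 = ∑ k ∈ Finset.Icc 1 j, Δ k) → v i = x) ∧
      (¬ (∃ j, 1 ≤ j ∧ j ≤ m ∧ (i : ℕ) + 1 = ∑ k ∈ Finset.Icc 1 j, Δ k) → v i = 0))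

/-- For an equidistant vector for mass `m·x` and `1 ≤ j ≤ Δ_y = ⌊(n+1)/(m+1)⌋`,
`f_j(v*) = (n+1−j)·x − j·(m·x)`. -/
def Psum (Δ : ℕ → ℕ) (t : ℕ) : ℕ := ∑ k ∈ Finset.Icc 1 t, Δ k

theorem statement4' (n m : ℕ) (hn : 1 ≤ n) (hm : m < n) (x : ℝ) (hx : 0 < x)
    (vstar : Fin n → ℝ)
    (Δ : ℕ → ℕ)
    (hpos : ∀ k ∈ Finset.Icc 1 (m + 1), 0 < Δ k)
    (hsum : ∑ k ∈ Finset.Icc 1 (m + 1), Δ k = n + 1)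
    (hbal : ∀ k₁ ∈ Finset.Icc 1 (m + 1), ∀ k₂ ∈ Finset.Icc 1 (m + 1), Δ k₁ ≤ Δ k₂ + 1)
    (hval : ∀ i : Fin n,
      ((∃ j, 1 ≤ j ∧ j ≤ m ∧ (i : ℕ) + 1 = ∑ k ∈ Finset.Icc 1 j, Δ k) → vstar i = x) ∧
      (¬ (∃ j, 1 ≤ j ∧ j ≤ m ∧ (i : ℕ) + 1 = ∑ k ∈ Finset.Icc 1 j, Δ k) → vstar i = 0))
    (j : ℕ) (hj1 : 1 ≤ j) (hj2 : j ≤ (n + 1) / (m + 1)) :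
    (∑ l ∈ Finset.range (n + 1 - j),
      max (x - ∑ i ∈ Finset.range j, if h : l + i < n then vstar ⟨l + i, h⟩ else 0) 0)
      = ((n : ℝ) + 1 - j) * x - (j : ℝ) * ((m : ℝ) * x) := by
  classical
  set P : ℕ → ℕ := Psum Δ with hPdef
  -- j ≤ Δ k for every k
  have hjΔ : ∀ k ∈ Finset.Icc 1 (m+1), j ≤ Δ k := by
    intro k hk
    refine hj2.trans ?_
    have hlt : n + 1 < (Δ k + 1) * (m + 1) := by
      calc n + 1 = ∑ k' ∈ Finset.Icc 1 (m+1), Δ k' := hsum.symm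
        _ < ∑ k' ∈ Finset.Icc 1 (m+1), (Δ k + 1) := by
            apply Finset.sum_lt_sum
            · intro i hi; exact hbal i hi k hk
            · exact ⟨k, hk, Nat.lt_succ_self _⟩
        _ = (Δ k + 1) * (m + 1) := by
            rw [Finset.sum_const, Nat.card_Icc]
            simp [Nat.mul_comm]
    have := (Nat.div_lt_iff_lt_mul (show 0 < m + 1 by omega)).2 hlt
    exact Nat.lt_succ_iff.mp this
  have hjn : j ≤ n + 1 := hj2.trans (Nat.div_le_self _ _)
  have hPmono : ∀ s t : ℕ, s ≤ t → P s ≤ P t := by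
    intro s t h
    exact Finset.sum_le_sum_of_subset (Finset.Icc_subset_Icc_right h)
  have hPsucc : ∀ t : ℕ, P (t+1) = P t + Δ (t+1) := by
    intro t
    exact Finset.sum_Icc_succ_top (by omega) Δ
  have hP1 : P 1 = Δ 1 := by simp [hPdef, Psum]
  have hPn : P (m+1) = n + 1 := hsum
  have hgap : ∀ t1 t2 : ℕ, 1 ≤ t1 → t1 < t2 → t2 ≤ m + 1 → P t1 + j ≤ P t2 := by
    intro t1 t2 h1 h12 h2
    have e := hPsucc t1
    have hd : j ≤ Δ (t1+1) := hjΔ _ (Finset.mem_Icc.2 ⟨by omega, by omega⟩)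
    have := hPmono (t1+1) t2 (by omega)
    omega
  have hlow : ∀ t, 1 ≤ t → j ≤ P t := by
    intro t ht
    have h1 : j ≤ Δ 1 := hjΔ 1 (Finset.mem_Icc.2 ⟨le_refl 1, by omega⟩)
    have := hPmono 1 t ht
    omega
  have hhigh : ∀ t, t ≤ m → P t + j ≤ n + 1 := by
    intro t ht
    have e := hPsucc m
    have hd : j ≤ Δ (m+1) := hjΔ _ (Finset.mem_Icc.2 ⟨by omega, le_refl _⟩)
    have := hPmono t m ht
    omega
  have hinj : ∀ t1 t2 : ℕ, 1 ≤ t1 → t1 ≤ m → 1 ≤ t2 → t2 ≤ m → P t1 = P t2 → t1 = t2 := by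
    intro t1 t2 a1 a2 b1 b2 he
    rcases lt_trichotomy t1 t2 with h | h | h
    · have := hgap t1 t2 a1 h (by omega); omega
    · exact h
    · have := hgap t2 t1 b1 h (by omega); omega
  -- the inner sum over i for a fixed mark t
  have key_inner : ∀ l t : ℕ,
      (∑ i ∈ Finset.range j, (if l+i+1 = P t then x else 0))
        = (if l+1 ≤ P t ∧ P t ≤ l+j then x else 0) := by
    intro l t
    by_cases hc : l+1 ≤ P t ∧ P t ≤ l + j
    · rw [if_pos hc]
      rw [Finset.sum_eq_single (P t - l - 1)]
      · rw [if_pos (by omega)]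
      · intro b hb hne
        rw [if_neg]
        simp only [Finset.mem_range] at hb
        omega
      · intro h
        exact absurd (Finset.mem_range.2 (by omega)) h
    · rw [if_neg hc]
      apply Finset.sum_eq_zero
      intro i hi
      simp only [Finset.mem_range] at hi
      rw [if_neg (by omega)]
  -- value as sum of indicators
  have key_V : ∀ p : ℕ,
      (if ∃ t, 1 ≤ t ∧ t ≤ m ∧ p+1 = P t then x else 0)
        = ∑ t ∈ Finset.Icc 1 m, (if p+1 = P t then x else 0) := by
    intro p
    by_cases hc : ∃ t, 1 ≤ t ∧ t ≤ m ∧ p+1 = P t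
    · obtain ⟨t0, h1, h2, h3⟩ := hc
      rw [if_pos ⟨t0, h1, h2, h3⟩, eq_comm]
      rw [Finset.sum_eq_single_of_mem t0 (Finset.mem_Icc.2 ⟨h1, h2⟩)]
      · rw [if_pos h3]
      · intro b hb hne
        rw [if_neg]
        intro hb3
        simp only [Finset.mem_Icc] at hb
        exact hne (hinj b t0 hb.1 hb.2 h1 h2 (by omega))
    · rw [if_neg hc, eq_comm]
      apply Finset.sum_eq_zero
      intro t ht
      simp only [Finset.mem_Icc] at ht
      rw [if_neg]
      intro h
      exact hc ⟨t, ht.1, ht.2, h⟩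
  have hN : ∀ l, l ∈ Finset.range (n+1-j) → ∀ i, i ∈ Finset.range j → l + i < n := by
    intro l hl i hi
    simp only [Finset.mem_range] at hl hi
    omega
  -- rewrite window sum
  have hS : ∀ l ∈ Finset.range (n+1-j),
      (∑ i ∈ Finset.range j, if h : l + i < n then vstar ⟨l+i, h⟩ else 0)
        = ∑ t ∈ Finset.Icc 1 m, (if l+1 ≤ P t ∧ P t ≤ l+j then x else 0) := by
    intro l hl
    have h1 : ∀ i ∈ Finset.range j,
        (if h : l + i < n then vstar ⟨l+i,h⟩ else 0)
          = ∑ t ∈ Finset.Icc 1 m, (if l+i+1 = P t then x else 0) := by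
      intro i hi
      have hlt : l + i < n := hN l hl i hi
      rw [dif_pos hlt, ← key_V (l+i)]
      by_cases hc : ∃ t, 1 ≤ t ∧ t ≤ m ∧ (l+i)+1 = P t
      · rw [if_pos hc]
        exact (hval ⟨l+i, hlt⟩).1 hc
      · rw [if_neg hc]
        exact (hval ⟨l+i, hlt⟩).2 hc
    rw [Finset.sum_congr rfl h1, Finset.sum_comm]
    exact Finset.sum_congr rfl (fun t _ => key_inner l t)
  -- window sum is at most x
  have hSbound : ∀ l : ℕ,
      (∑ t ∈ Finset.Icc 1 m, (if l+1 ≤ P t ∧ P t ≤ l+j then x else 0)) ≤ x := by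
    intro l
    by_cases hc : ∃ t ∈ Finset.Icc 1 m, l+1 ≤ P t ∧ P t ≤ l+j
    · obtain ⟨t0, ht0, hc0⟩ := hc
      rw [Finset.sum_eq_single_of_mem t0 ht0]
      · rw [if_pos hc0]
      · intro b hb hne
        rw [if_neg]
        intro hcb
        simp only [Finset.mem_Icc] at hb ht0
        rcases lt_trichotomy b t0 with h | h | h
        · have := hgap b t0 hb.1 h (by omega); omega
        · exact hne h
        · have := hgap t0 b ht0.1 h (by omega); omega
    · rw [Finset.sum_eq_zero]
      · exact le_of_lt hx
      · intro t ht
        rw [if_neg (fun h => hc ⟨t, ht, h⟩)]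
  -- main computation
  calc (∑ l ∈ Finset.range (n + 1 - j),
        max (x - ∑ i ∈ Finset.range j, if h : l + i < n then vstar ⟨l + i, h⟩ else 0) 0)
      = ∑ l ∈ Finset.range (n + 1 - j),
          (x - ∑ t ∈ Finset.Icc 1 m, (if l+1 ≤ P t ∧ P t ≤ l+j then x else 0)) := by
        apply Finset.sum_congr rfl
        intro l hl
        rw [hS l hl, max_eq_left (by linarith [hSbound l])]
    _ = (n + 1 - j : ℕ) * x
          - ∑ t ∈ Finset.Icc 1 m, ∑ l ∈ Finset.range (n + 1 - j),
              (if l+1 ≤ P t ∧ P t ≤ l+j then x else 0) := by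
        rw [Finset.sum_sub_distrib, Finset.sum_const, Finset.card_range, nsmul_eq_mul,
          Finset.sum_comm]
    _ = (n + 1 - j : ℕ) * x - ∑ t ∈ Finset.Icc 1 m, (j : ℝ) * x := by
        congr 1
        apply Finset.sum_congr rfl
        intro t ht
        simp only [Finset.mem_Icc] at ht
        have hl1 : j ≤ P t := hlow t ht.1
        have hl2 : P t + j ≤ n + 1 := hhigh t ht.2
        rw [← Finset.sum_filter]
        have hfil : (Finset.range (n+1-j)).filter (fun l => l+1 ≤ P t ∧ P t ≤ l+j)
            = Finset.Ico (P t - j) (P t) := by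
          ext l
          simp only [Finset.mem_filter, Finset.mem_range, Finset.mem_Ico]
          omega
        rw [hfil, Finset.sum_const, Nat.card_Ico, nsmul_eq_mul]
        congr 2
        omega
    _ = ((n : ℝ) + 1 - j) * x - (j : ℝ) * ((m : ℝ) * x) := by
        rw [Finset.sum_const, Nat.card_Icc, nsmul_eq_mul]
        have : ((n + 1 - j : ℕ) : ℝ) = (n : ℝ) + 1 - j := by
          push_cast [Nat.cast_sub hjn]
          ring
        rw [this]
        push_cast
        ring

theorem statement4 (n m : ℕ) (hn : 1 ≤ n) (hm : m < n) (x : ℝ) (hx : 0 < x)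
    (vstar : Fin n → ℝ) (hv : IsEquidistant n m x vstar)
    (j : ℕ) (hj1 : 1 ≤ j) (hj2 : j ≤ (n + 1) / (m + 1)) :
    fj n x j vstar = ((n : ℝ) + 1 - j) * x - (j : ℝ) * ((m : ℝ) * x) := by
  obtain ⟨Δ, h1, h2, h3, h4⟩ := hv
  exact statement4' n m hn hm x hx vstar Δ h1 h2 h3 h4 j hj1 hj2
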